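/- Let (X,G) be a CR-dynamical system such that trans_2(G) ≠ ∅. If X has no isolated points, then (X,G) is transitive. -/

import Mathlib

/-- A trajectory of `x` in the CR-dynamical system `(X, G)`:
a sequence `(x₁, x₂, x₃, …)` (indexed here from `0`) with `x₁ = x` and
`(xᵢ, xᵢ₊₁) ∈ G` for every `i`. -/
def IsTraj {X : Type*} (G : Set (X × X)) (x : X) (s : ℕ → X) : Prop :=
  s 0 = x ∧ ∀ n : ℕ, (s n, s (n + 1)) ∈ G

/-- `RelImg G n A` is `G^n(A)`: all `y` such that for some `x ∈ A` there are
`x₁, …, x_{n+1}` with `x₁ = x`, `x_{n+1} = y` and `(xᵢ, xᵢ₊₁) ∈ G` for each `i ≤ n`.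
For `n = 0` this gives `A` itself. -/
def RelImg {X : Type*} (G : Set (X × X)) (n : ℕ) (A : Set X) : Set X :=
  {y | ∃ x ∈ A, ∃ f : ℕ → X, f 0 = x ∧ f n = y ∧ ∀ i < n, (f i, f (i + 1)) ∈ G}

/-- The inverse relation `G⁻¹ = {(y, x) | (x, y) ∈ G}`. -/
def RelInv {X : Type*} (G : Set (X × X)) : Set (X × X) := Prod.swap ⁻¹' G

/-- `x` is a legal point of `(X, G)`: it has at least one trajectory. -/
def Legal {X : Type*} (G : Set (X × X)) (x : X) : Prop := ∃ s : ℕ → X, IsTraj G x s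

/-- `U_G^⊕(x)`: the union of the forward orbits of all trajectories of `x`. -/
def UOrb {X : Type*} (G : Set (X × X)) (x : X) : Set X :=
  ⋃ s ∈ {s : ℕ → X | IsTraj G x s}, Set.range s

/-- The set of 1-transitive points: legal points all of whose trajectories have
dense forward orbit. -/
def Trans1 {X : Type*} [MetricSpace X] (G : Set (X × X)) : Set X :=
  {x | Legal G x ∧ ∀ s : ℕ → X, IsTraj G x s → Dense (Set.range s)}

/-- The set of 2-transitive points: points having a trajectory with dense forward
orbit. -/
def Trans2 {X : Type*} [MetricSpace X] (G : Set (X × X)) : Set X :=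
  {x | ∃ s : ℕ → X, IsTraj G x s ∧ Dense (Set.range s)}

/-- The set of 3-transitive points: legal points `x` with `U_G^⊕(x)` dense. -/
def Trans3 {X : Type*} [MetricSpace X] (G : Set (X × X)) : Set X :=
  {x | Legal G x ∧ Dense (UOrb G x)}

/-- The set of intransitive points: legal points that are not 3-transitive. -/
def Intrans {X : Type*} [MetricSpace X] (G : Set (X × X)) : Set X :=
  {x | Legal G x ∧ ¬ Dense (UOrb G x)}

/-- `(X, G)` is transitive: for all nonempty open `U, V` there is `n ≥ 0` with
`G^n(U) ∩ V ≠ ∅`. -/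
def CRTransitive {X : Type*} [MetricSpace X] (G : Set (X × X)) : Prop :=
  ∀ U V : Set X, IsOpen U → U.Nonempty → IsOpen V → V.Nonempty →
    ∃ n : ℕ, (RelImg G n U ∩ V).Nonempty

/-- `(X, G)` is +transitive: for all nonempty open `U, V` there is `n ≥ 1` with
`G^n(U) ∩ V ≠ ∅`. -/
def CRPlusTransitive {X : Type*} [MetricSpace X] (G : Set (X × X)) : Prop :=
  ∀ U V : Set X, IsOpen U → U.Nonempty → IsOpen V → V.Nonempty →
    ∃ n : ℕ, 0 < n ∧ (RelImg G n U ∩ V).Nonempty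

/-- If `trans₂(G) ≠ ∅` and `X` has no isolated points, then `(X, G)` is
transitive. -/
theorem stmt19 {X : Type*} [MetricSpace X] [CompactSpace X] [Nonempty X]
    (G : Set (X × X)) (hGc : IsClosed G) (hGne : G.Nonempty)
    (h : (Trans2 G).Nonempty)
    (hiso : ∀ z : X, ¬ IsOpen ({z} : Set X)) :
    CRTransitive G := by
  obtain ⟨x, s, hs, hd⟩ := h
  intro U V hU hUne hV hVne
  -- find i with s i ∈ U
  obtain ⟨y, hyr, hyU⟩ := hd.exists_mem_open hU hUne
  obtain ⟨i, rfl⟩ := hyr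
  -- V is infinite
  have hVinf : V.Infinite := by
    intro hfin
    obtain ⟨v, hv⟩ := hVne
    have h1 : IsOpen ({v} : Set X) := by
      have : ({v} : Set X) = V \ (V \ {v}) := by
        ext z; simp (config := {contextual := true}) [hv]
      rw [this]
      exact hV.sdiff (hfin.diff).isClosed
    exact hiso v h1
  -- W = V minus finitely many points
  have hWne : (V \ s '' Set.Iic i).Nonempty :=
    (hVinf.diff ((Set.finite_Iic i).image s)).nonempty
  have hWo : IsOpen (V \ s '' Set.Iic i) :=
    hV.sdiff ((Set.finite_Iic i).image s).isClosed
  obtain ⟨z, hzr, hzW⟩ := hd.exists_mem_open hWo hWne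
  obtain ⟨j, rfl⟩ := hzr
  have hij : i ≤ j := by
    by_contra hlt
    exact hzW.2 ⟨j, Nat.le_of_lt (Nat.lt_of_not_le hlt), rfl⟩
  refine ⟨j - i, s j, ⟨s i, hyU, fun k => s (i + k), by simp, ?_, ?_⟩, hzW.1⟩
  · show s (i + (j - i)) = s j; rw [Nat.add_sub_cancel' hij]
  · intro k _
    exact hs.2 (i + k)
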